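/- Every CA-ML instance, possibly with downward-feasible constraints on students, has exactly one feasible pair-stable matching: if M and M' are feasible pair-stable matchings then M = M'. -/

import Mathlib

open Finset

/-- An instance of the Course Allocation problem: students `S`, courses `C`,
mutual acceptability `acc`, strict preferences of students over (acceptable) courses
and of courses over (acceptable) students, positive credits, upper quotas and credit limits. -/
structure CA (S C : Type*) where
  acc : S → C → Prop
  sPref : S → C → C → Prop
  cPref : C → S → S → Prop
  credits : C → ℚ
  quota : C → ℕ
  limit : S → ℚ
  credits_pos : ∀ c, 0 < credits c
  sPref_irrefl : ∀ s c, ¬ sPref s c c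
  sPref_trans : ∀ s c₁ c₂ c₃, sPref s c₁ c₂ → sPref s c₂ c₃ → sPref s c₁ c₃
  sPref_total : ∀ s c₁ c₂, acc s c₁ → acc s c₂ → c₁ ≠ c₂ → sPref s c₁ c₂ ∨ sPref s c₂ c₁
  cPref_irrefl : ∀ c s, ¬ cPref c s s
  cPref_trans : ∀ c s₁ s₂ s₃, cPref c s₁ s₂ → cPref c s₂ s₃ → cPref c s₁ s₃
  cPref_total : ∀ c s₁ s₂, acc s₁ c → acc s₂ c → s₁ ≠ s₂ → cPref c s₁ s₂ ∨ cPref c s₂ s₁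

section CourseAllocation

variable {S C : Type*} [DecidableEq S] [DecidableEq C]

/-- The set `C_M(s)` of courses assigned to student `s` in assignment `M`. -/
def CM (M : Finset (S × C)) (s : S) : Finset C :=
  (M.filter fun p => p.1 = s).image Prod.snd

/-- The set `S_M(c)` of students assigned to course `c` in assignment `M`. -/
def SM (M : Finset (S × C)) (c : C) : Finset S :=
  (M.filter fun p => p.2 = c).image Prod.fst

/-- The total number of credits `O(D)` of a set of courses `D`. -/
def CA.O (I : CA S C) (D : Finset C) : ℚ := ∑ c ∈ D, I.credits c

/-- `M` is a matching: all pairs acceptable, credit limits and upper quotas respected. -/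
def CA.IsMatching (I : CA S C) (M : Finset (S × C)) : Prop :=
  (∀ p ∈ M, I.acc p.1 p.2) ∧
  (∀ s, I.O (CM M s) ≤ I.limit s) ∧
  (∀ c, (SM M c).card ≤ I.quota c)

/-- Feasibility of a matching with respect to families `F` of feasible course sets. -/
def Feasible (F : S → Set (Finset C)) (M : Finset (S × C)) : Prop :=
  ∀ s, CM M s ∈ F s

/-- `F` is a family of downward-feasible constraints: every feasible set consists of
acceptable courses, and subsets of feasible sets are feasible. -/
def CA.DownwardFeasible (I : CA S C) (F : S → Set (Finset C)) : Prop :=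
  (∀ s, ∀ D ∈ F s, ∀ c ∈ D, I.acc s c) ∧
  (∀ s, ∀ D ∈ F s, ∀ D' ⊆ D, D' ∈ F s)

/-- Absent downward-feasible constraints (every set of courses feasible). -/
def noF : S → Set (Finset C) := fun _ => Set.univ

/-- Condition (1) of all blocking definitions: course `c` is undersubscribed in `M`
or prefers `s` to one of its assigned students. -/
def CA.Wants (I : CA S C) (M : Finset (S × C)) (s : S) (c : C) : Prop :=
  (SM M c).card < I.quota c ∨ ∃ s' ∈ SM M c, I.cPref c s s'

/-- `(s, c)` is a blocking pair of `M` (w.r.t. feasibility constraints `F`). -/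
def CA.BlockingPair (I : CA S C) (F : S → Set (Finset C)) (M : Finset (S × C))
    (s : S) (c : C) : Prop :=
  I.acc s c ∧ (s, c) ∉ M ∧ I.Wants M s c ∧
  ∃ D ⊆ CM M s, (∀ c' ∈ D, I.sPref s c c') ∧
    I.O (CM M s) - I.O D + I.credits c ≤ I.limit s ∧
    (CM M s \ D) ∪ {c} ∈ F s

def CA.PairStable (I : CA S C) (F : S → Set (Finset C)) (M : Finset (S × C)) : Prop :=
  ∀ s c, ¬ I.BlockingPair F M s c

/-- `(s, c)` is a size-blocking pair of `M`: like a blocking pair, but additionally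
the dropped set `D` must satisfy `O(D) ≤ O(c)`. -/
def CA.SizeBlockingPair (I : CA S C) (F : S → Set (Finset C)) (M : Finset (S × C))
    (s : S) (c : C) : Prop :=
  I.acc s c ∧ (s, c) ∉ M ∧ I.Wants M s c ∧
  ∃ D ⊆ CM M s, (∀ c' ∈ D, I.sPref s c c') ∧ I.O D ≤ I.credits c ∧
    I.O (CM M s) - I.O D + I.credits c ≤ I.limit s ∧
    (CM M s \ D) ∪ {c} ∈ F s

def CA.PairSizeStable (I : CA S C) (F : S → Set (Finset C)) (M : Finset (S × C)) : Prop :=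
  ∀ s c, ¬ I.SizeBlockingPair F M s c

/-- `(s, B)` is a blocking coalition of `M`. -/
def CA.BlockingCoalition (I : CA S C) (F : S → Set (Finset C)) (M : Finset (S × C))
    (s : S) (B : Finset C) : Prop :=
  B.Nonempty ∧ (∀ c ∈ B, I.acc s c ∧ (s, c) ∉ M) ∧ (∀ c ∈ B, I.Wants M s c) ∧
  ∃ D ⊆ CM M s, (∀ c ∈ B, ∀ c' ∈ D, I.sPref s c c') ∧ I.O D ≤ I.O B ∧
    I.O (CM M s) - I.O D + I.O B ≤ I.limit s ∧
    (CM M s \ D) ∪ B ∈ F s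

def CA.CoalitionStable (I : CA S C) (F : S → Set (Finset C)) (M : Finset (S × C)) : Prop :=
  ∀ s B, ¬ I.BlockingCoalition F M s B

/-- `(s, B)` is a first-blocking coalition of `M`: as a blocking coalition, except that
`s` need only prefer her most-preferred course of `B` to her most-preferred course of `D`
(equivalently, some course of `B` is preferred to every course of `D`; vacuous if `D = ∅`). -/
def CA.FirstBlockingCoalition (I : CA S C) (F : S → Set (Finset C)) (M : Finset (S × C))
    (s : S) (B : Finset C) : Prop :=
  B.Nonempty ∧ (∀ c ∈ B, I.acc s c ∧ (s, c) ∉ M) ∧ (∀ c ∈ B, I.Wants M s c) ∧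
  ∃ D ⊆ CM M s, (∃ b ∈ B, ∀ c' ∈ D, I.sPref s b c') ∧ I.O D ≤ I.O B ∧
    I.O (CM M s) - I.O D + I.O B ≤ I.limit s ∧
    (CM M s \ D) ∪ B ∈ F s

def CA.FirstCoalitionStable (I : CA S C) (F : S → Set (Finset C)) (M : Finset (S × C)) : Prop :=
  ∀ s B, ¬ I.FirstBlockingCoalition F M s B

/-- Every course exactly fills its upper quota. -/
def CA.CourseComplete (I : CA S C) (M : Finset (S × C)) : Prop :=
  ∀ c, (SM M c).card = I.quota c

/-- Every student takes as many credits as her credit limit. -/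
def CA.StudentComplete (I : CA S C) (M : Finset (S × C)) : Prop :=
  ∀ s, I.O (CM M s) = I.limit s

/-- The size of a matching: total number of credits taken by all students. -/
def CA.size [Fintype S] (I : CA S C) (M : Finset (S × C)) : ℚ :=
  ∑ s : S, I.O (CM M s)

/-- `ml` is a master list of students for the instance `I`: a strict total order on
students with which every course's preferences are consistent. -/
def CA.MasterList (I : CA S C) (ml : S → S → Prop) : Prop :=
  (∀ s, ¬ ml s s) ∧ (∀ s₁ s₂ s₃, ml s₁ s₂ → ml s₂ s₃ → ml s₁ s₃) ∧
  (∀ s₁ s₂, s₁ ≠ s₂ → ml s₁ s₂ ∨ ml s₂ s₁) ∧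
  (∀ c s s', I.acc s c → I.acc s' c → (I.cPref c s s' ↔ ml s s'))

end CourseAllocation

section AuxLemmas

variable {S C : Type*} [DecidableEq S] [DecidableEq C]

lemma mem_CM {M : Finset (S × C)} {s : S} {c : C} : c ∈ CM M s ↔ (s, c) ∈ M := by
  simp only [CM, Finset.mem_image, Finset.mem_filter]
  constructor
  · rintro ⟨⟨a, b⟩, ⟨hm, h1⟩, h2⟩
    simp only at h1 h2
    subst h1; subst h2; exact hm
  · intro h; exact ⟨(s, c), ⟨h, rfl⟩, rfl⟩

lemma mem_SM {M : Finset (S × C)} {s : S} {c : C} : s ∈ SM M c ↔ (s, c) ∈ M := by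
  simp only [SM, Finset.mem_image, Finset.mem_filter]
  constructor
  · rintro ⟨⟨a, b⟩, ⟨hm, h1⟩, h2⟩
    simp only at h1 h2
    subst h1; subst h2; exact hm
  · intro h; exact ⟨(s, c), ⟨h, rfl⟩, rfl⟩

lemma O_mono (I : CA S C) {A B : Finset C} (h : A ⊆ B) : I.O A ≤ I.O B :=
  Finset.sum_le_sum_of_subset_of_nonneg h (fun c _ _ => (I.credits_pos c).le)

lemma O_sdiff (I : CA S C) (A B : Finset C) : I.O A - I.O (A \ B) = I.O (A ∩ B) := by
  have h1 : A ∩ B ⊆ A := Finset.inter_subset_left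
  have := Finset.sum_sdiff (f := I.credits) h1
  have h2 : A \ (A ∩ B) = A \ B := Finset.sdiff_inter_self_left A B
  rw [h2] at this
  simp only [CA.O]
  linarith

/-- A finite nonempty set has a minimal element w.r.t. any irreflexive transitive
relation. -/
lemma exists_min_rel {α : Type*} (r : α → α → Prop) (hirr : ∀ a, ¬ r a a)
    (htr : ∀ a b c, r a b → r b c → r a c) :
    ∀ T : Finset α, T.Nonempty → ∃ s ∈ T, ∀ t ∈ T, ¬ r t s := by
  classical
  intro T
  induction T using Finset.strongInduction with
  | _ T ih =>
    rintro ⟨x, hx⟩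
    by_cases hmin : ∀ t ∈ T, ¬ r t x
    · exact ⟨x, hx, hmin⟩
    · push_neg at hmin
      obtain ⟨t, htT, htx⟩ := hmin
      set T' := T.filter (fun y => r y x) with hT'
      have hsub : T' ⊂ T := by
        refine Finset.ssubset_iff_of_subset (Finset.filter_subset _ _) |>.mpr ?_
        exact ⟨x, hx, by simp [hT', hirr x]⟩
      obtain ⟨m, hmT', hmmin⟩ := ih T' hsub ⟨t, by simp [hT', htT, htx]⟩
      have hmx : r m x := (Finset.mem_filter.mp hmT').2
      refine ⟨m, Finset.mem_of_mem_filter m hmT', fun u huT hum => ?_⟩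
      exact hmmin u (Finset.mem_filter.mpr ⟨huT, htr _ _ _ hum hmx⟩) hum

/-- Key step: if students above `s` are matched identically in `M` and `M'`, `s` gets
`c` in `M'` but not in `M`, and `s` prefers `c` to everything she gets only in `M`,
then `(s, c)` blocks `M`. -/
lemma key_block (I : CA S C) (ml : S → S → Prop) (hml : I.MasterList ml)
    (F : S → Set (Finset C)) (hF : I.DownwardFeasible F)
    (M M' : Finset (S × C)) (hM : I.IsMatching M) (hM' : I.IsMatching M')
    (hMf' : Feasible F M') (hMs : I.PairStable F M)
    (s : S) (htop : ∀ t, ml t s → CM M t = CM M' t)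
    (c : C) (hc1 : c ∈ CM M' s) (hc0 : c ∉ CM M s)
    (hbest : ∀ c' ∈ CM M s, c' ∉ CM M' s → I.sPref s c c') : False := by
  obtain ⟨hml_irr, hml_tr, hml_tot, hml_pref⟩ := hml
  apply hMs s c
  have hacc : I.acc s c := hM'.1 (s, c) (mem_CM.mp hc1)
  refine ⟨hacc, fun h => hc0 (mem_CM.mpr h), ?_, ?_⟩
  · -- Wants
    rcases lt_or_ge (SM M c).card (I.quota c) with h | h
    · exact Or.inl h
    · right
      by_contra hno
      push_neg at hno
      have hsub : SM M c ⊆ SM M' c := by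
        intro s' hs'
        have hs'M : (s', c) ∈ M := mem_SM.mp hs'
        have hacc' : I.acc s' c := hM.1 _ hs'M
        have hne : s' ≠ s := by
          rintro rfl
          exact hc0 (mem_CM.mpr hs'M)
        have hml' : ml s' s := by
          rcases hml_tot s' s hne with h' | h'
          · exact h'
          · exact absurd ((hml_pref c s s' hacc hacc').mpr h') (hno s' hs')
        have := htop s' hml'
        exact mem_SM.mpr (mem_CM.mp (this ▸ mem_CM.mpr hs'M))
      have hss : SM M c ⊂ SM M' c :=
        Finset.ssubset_iff_of_subset hsub |>.mpr
          ⟨s, mem_SM.mpr (mem_CM.mp hc1), fun hx => hc0 (mem_CM.mpr (mem_SM.mp hx))⟩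
      have := Finset.card_lt_card hss
      have := hM'.2.2 c
      omega
  · -- the set D
    refine ⟨CM M s \ CM M' s, Finset.sdiff_subset, ?_, ?_, ?_⟩
    · intro c' hc'
      rw [Finset.mem_sdiff] at hc'
      exact hbest c' hc'.1 hc'.2
    · rw [O_sdiff]
      have hsub : (CM M s ∩ CM M' s) ∪ {c} ⊆ CM M' s := by
        intro x hx
        rcases Finset.mem_union.mp hx with hx | hx
        · exact (Finset.mem_inter.mp hx).2
        · rw [Finset.mem_singleton.mp hx]; exact hc1
      have hdisj : Disjoint (CM M s ∩ CM M' s) ({c} : Finset C) := by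
        simp only [Finset.disjoint_singleton_right, Finset.mem_inter, not_and]
        intro hx; exact absurd hx hc0
      have : I.O ((CM M s ∩ CM M' s) ∪ {c}) =
          I.O (CM M s ∩ CM M' s) + I.credits c := by
        simp only [CA.O, Finset.sum_union hdisj, Finset.sum_singleton]
      calc I.O (CM M s ∩ CM M' s) + I.credits c
          = I.O ((CM M s ∩ CM M' s) ∪ {c}) := this.symm
        _ ≤ I.O (CM M' s) := O_mono I hsub
        _ ≤ I.limit s := hM'.2.1 s
    · have h1 : CM M s \ (CM M s \ CM M' s) = CM M s ∩ CM M' s :=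
        Finset.sdiff_sdiff_self_left _ _
      rw [h1]
      have hsub : (CM M s ∩ CM M' s) ∪ {c} ⊆ CM M' s := by
        intro x hx
        rcases Finset.mem_union.mp hx with hx | hx
        · exact (Finset.mem_inter.mp hx).2
        · rw [Finset.mem_singleton.mp hx]; exact hc1
      exact hF.2 s _ (hMf' s) _ hsub

end AuxLemmas

/-- Every CA-ML instance, possibly with downward-feasible constraints,
has exactly one feasible pair-stable matching. -/
theorem unique_feasible_pairStable_of_masterList
    {S C : Type*} [Fintype S] [Fintype C] [DecidableEq S] [DecidableEq C]
    (I : CA S C) (ml : S → S → Prop) (hml : I.MasterList ml)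
    (F : S → Set (Finset C)) (hF : I.DownwardFeasible F)
    (M M' : Finset (S × C))
    (hM : I.IsMatching M) (hMf : Feasible F M) (hMs : I.PairStable F M)
    (hM' : I.IsMatching M') (hMf' : Feasible F M') (hMs' : I.PairStable F M') :
    M = M' := by
  classical
  obtain ⟨hml_irr, hml_tr, hml_tot, hml_pref⟩ := hml
  have hml' : I.MasterList ml := ⟨hml_irr, hml_tr, hml_tot, hml_pref⟩
  by_contra hne
  have hT : ∃ s, CM M s ≠ CM M' s := by
    by_contra hall
    push_neg at hall
    apply hne
    ext ⟨s, c⟩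
    rw [← mem_CM, ← mem_CM, hall s]
  set T : Finset S := Finset.univ.filter (fun s => CM M s ≠ CM M' s) with hTdef
  have hTne : T.Nonempty := by
    obtain ⟨s, hs⟩ := hT
    exact ⟨s, by simp [hTdef, hs]⟩
  obtain ⟨s, hsT, hsmin⟩ := exists_min_rel ml hml_irr hml_tr T hTne
  have htop : ∀ t, ml t s → CM M t = CM M' t := by
    intro t ht
    by_contra hts
    exact hsmin t (by simp [hTdef, hts]) ht
  have hsd : CM M s ≠ CM M' s := by
    have := Finset.mem_filter.mp hsT
    exact this.2
  set G : Finset C := (CM M s \ CM M' s) ∪ (CM M' s \ CM M s) with hGdef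
  have hGne : G.Nonempty := by
    rw [Finset.nonempty_iff_ne_empty]
    intro hG
    apply hsd
    have h1 : CM M s \ CM M' s = ∅ := by
      rw [← Finset.subset_empty, ← hG]; exact Finset.subset_union_left
    have h2 : CM M' s \ CM M s = ∅ := by
      rw [← Finset.subset_empty, ← hG]; exact Finset.subset_union_right
    exact Finset.Subset.antisymm (Finset.sdiff_eq_empty_iff_subset.mp h1)
      (Finset.sdiff_eq_empty_iff_subset.mp h2)
  obtain ⟨c, hcG, hcmin⟩ := exists_min_rel (I.sPref s) (I.sPref_irrefl s)
    (I.sPref_trans s) G hGne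
  have haccG : ∀ c' ∈ G, I.acc s c' := by
    intro c' hc'
    rcases Finset.mem_union.mp hc' with h | h
    · exact hM.1 _ (mem_CM.mp (Finset.mem_sdiff.mp h).1)
    · exact hM'.1 _ (mem_CM.mp (Finset.mem_sdiff.mp h).1)
  have hpref : ∀ c' ∈ G, c' ≠ c → I.sPref s c c' := by
    intro c' hc' hne'
    rcases I.sPref_total s c c' (haccG c hcG) (haccG c' hc') (Ne.symm hne') with h | h
    · exact h
    · exact absurd h (hcmin c' hc')
  rcases Finset.mem_union.mp hcG with hc | hc
  · -- c ∈ CM M s \ CM M' s : blocking pair of M'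
    rw [Finset.mem_sdiff] at hc
    refine key_block I ml hml' F hF M' M hM' hM hMf hMs' s
      (fun t ht => (htop t ht).symm) c hc.1 hc.2 ?_
    intro c' hc'1 hc'2
    have hc'G : c' ∈ G := Finset.mem_union_right _ (Finset.mem_sdiff.mpr ⟨hc'1, hc'2⟩)
    exact hpref c' hc'G (fun h => hc'2 (h ▸ hc.1))
  · -- c ∈ CM M' s \ CM M s : blocking pair of M
    rw [Finset.mem_sdiff] at hc
    refine key_block I ml hml' F hF M M' hM hM' hMf' hMs s htop c hc.1 hc.2 ?_
    intro c' hc'1 hc'2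
    have hc'G : c' ∈ G := Finset.mem_union_left _ (Finset.mem_sdiff.mpr ⟨hc'1, hc'2⟩)
    exact hpref c' hc'G (fun h => hc'2 (h ▸ hc.1))
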